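/- Let K ⊆ ℝⁿ be a compact set, τ a probability measure on K, and φ₁,…,φ_T continuous real-valued functions on K that are orthonormal in L²(τ). Let P = Σ_{i=1}^T a_i φ_i with sup_{z∈K} |P(z)| ≤ 1. Let μ be a finite positive Borel measure on K such that P = 1 on the support of μ (so that ∫_K P dμ = ‖μ‖_TV), let ε ∈ ℝ^T with ‖ε‖₂ ≤ δ, and set y_i := ∫_K φ_i dμ + ε_i. If Δ̂ is a finite signed Borel measure attaining the minimum of ‖ν‖_TV over all finite signed Borel measures ν on K with ‖(∫_K φ_i dν − y_i)_i‖₂ ≤ δ, then 0 ≤ ‖Δ̂‖_TV − ∫_K P dΔ̂ ≤ 2δ. -/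

import Mathlib

open MeasureTheory

noncomputable section

/-- Integration of a real function against a finite signed Borel measure,
via the Jordan decomposition `ν = ν₊ − ν₋`. -/
noncomputable def sint {α : Type*} [MeasurableSpace α] (ν : SignedMeasure α) (f : α → ℝ) : ℝ :=
  ∫ x, f x ∂ν.toJordanDecomposition.posPart - ∫ x, f x ∂ν.toJordanDecomposition.negPart

/-- The total variation norm `‖ν‖_TV = ν₊(K) + ν₋(K)` of a finite signed measure. -/
noncomputable def tvNorm {α : Type*} [MeasurableSpace α] (ν : SignedMeasure α) : ℝ :=
  (ν.totalVariation Set.univ).toReal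

lemma jd_of_toSignedMeasure {α : Type*} [MeasurableSpace α] (μ : Measure α) [IsFiniteMeasure μ] :
    μ.toSignedMeasure.toJordanDecomposition
      = ⟨μ, 0, Measure.MutuallySingular.zero_right⟩ := by
  apply JordanDecomposition.toSignedMeasure_injective
  rw [SignedMeasure.toSignedMeasure_toJordanDecomposition]
  simp [JordanDecomposition.toSignedMeasure, Measure.toSignedMeasure_zero]

lemma integrable_of_cOn {n : ℕ} {K : Set (Fin n → ℝ)} (hK : IsCompact K)
    {f : (Fin n → ℝ) → ℝ} (hf : ContinuousOn f K)
    (ρ : Measure (Fin n → ℝ)) [IsFiniteMeasure ρ] (hρ : ρ Kᶜ = 0) :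
    Integrable f ρ := by
  have hKm : MeasurableSet K := hK.isClosed.measurableSet
  have hae : ∀ᵐ z ∂ρ, z ∈ K := by
    rw [ae_iff]; simpa [Set.compl_def] using hρ
  obtain ⟨C, hC⟩ := hK.exists_bound_of_continuousOn hf
  have hres : ρ.restrict K = ρ := Measure.restrict_eq_self_of_ae_mem hae
  have hmeas : AEStronglyMeasurable f ρ := by
    rw [← hres]; exact (hf.aemeasurable hKm).aestronglyMeasurable
  refine (integrable_const C).mono' hmeas ?_
  filter_upwards [hae] with z hz using hC z hz

/-- **Key lemma, part (2)**: let `φ₁,…,φ_T` be continuous functions on a compact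
`K ⊆ ℝⁿ`, orthonormal in `L²(τ)`, and `P = Σ aᵢ φᵢ` with `sup_K |P| ≤ 1`.  Let `μ` be
a finite positive Borel measure on `K` with `P = 1` on the support of `μ` (so
`∫ P dμ = ‖μ‖_TV`), and `yᵢ = ∫ φᵢ dμ + εᵢ` with `‖ε‖₂ ≤ δ`.  If `Δ̂` minimizes the
TV norm among feasible signed measures, then `0 ≤ ‖Δ̂‖_TV − ∫ P dΔ̂ ≤ 2δ`. -/
theorem tv_minus_certificate_integral_bound {n T : ℕ}
    (K : Set (Fin n → ℝ)) (hK : IsCompact K)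
    (τ : Measure (Fin n → ℝ)) [IsProbabilityMeasure τ] (hτ : τ Kᶜ = 0)
    (φ : Fin T → (Fin n → ℝ) → ℝ) (hφc : ∀ i, ContinuousOn (φ i) K)
    (hON : ∀ i j, ∫ z, φ i z * φ j z ∂τ = if i = j then (1 : ℝ) else 0)
    (a : Fin T → ℝ) (P : (Fin n → ℝ) → ℝ) (hP : P = fun z => ∑ i, a i * φ i z)
    (hPle : ∀ z ∈ K, |P z| ≤ 1)
    (μ : Measure (Fin n → ℝ)) [IsFiniteMeasure μ] (hμK : μ Kᶜ = 0)
    (hPsupp : ∀ᵐ z ∂μ, P z = 1)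
    (hPtv : ∫ z, P z ∂μ = (μ Set.univ).toReal)
    (δ : ℝ) (ε : Fin T → ℝ) (hε : Real.sqrt (∑ i, ε i ^ 2) ≤ δ)
    (y : Fin T → ℝ) (hy : ∀ i, y i = (∫ z, φ i z ∂μ) + ε i)
    (Δ : SignedMeasure (Fin n → ℝ)) (hΔK : Δ.totalVariation Kᶜ = 0)
    (hΔfeas : Real.sqrt (∑ i, (sint Δ (φ i) - y i) ^ 2) ≤ δ)
    (hΔmin : ∀ ν : SignedMeasure (Fin n → ℝ), ν.totalVariation Kᶜ = 0 →
      Real.sqrt (∑ i, (sint ν (φ i) - y i) ^ 2) ≤ δ → tvNorm Δ ≤ tvNorm ν) :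
    0 ≤ tvNorm Δ - sint Δ P ∧ tvNorm Δ - sint Δ P ≤ 2 * δ := by
  have hKm : MeasurableSet K := hK.isClosed.measurableSet
  have hPc : ContinuousOn P K := by
    rw [hP]; exact continuousOn_finset_sum _ fun i _ => continuousOn_const.mul (hφc i)
  set ν₁ := Δ.toJordanDecomposition.posPart with hν₁
  set ν₂ := Δ.toJordanDecomposition.negPart with hν₂
  have htv : Δ.totalVariation = ν₁ + ν₂ := rfl
  have hparts : ν₁ Kᶜ = 0 ∧ ν₂ Kᶜ = 0 := by
    have h := hΔK; rw [htv] at h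
    simpa [Measure.add_apply, add_eq_zero] using h
  have haeK : ∀ (ρ : Measure (Fin n → ℝ)), ρ Kᶜ = 0 → ∀ᵐ z ∂ρ, z ∈ K := by
    intro ρ hρ; rw [ae_iff]; simpa [Set.compl_def] using hρ
  -- (1) ∑ aᵢ² ≤ 1
  have hφint : ∀ i j, Integrable (fun z => φ i z * φ j z) τ :=
    fun i j => integrable_of_cOn hK ((hφc i).mul (hφc j)) τ hτ
  have hsq : ∫ z, P z ^ 2 ∂τ = ∑ i, a i ^ 2 := by
    have e1 : ∀ z, P z ^ 2 = ∑ i, ∑ j, (a i * a j) * (φ i z * φ j z) := by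
      intro z; rw [hP]; simp only [sq, Finset.sum_mul_sum]
      exact Finset.sum_congr rfl fun i _ => Finset.sum_congr rfl fun j _ => by ring
    calc ∫ z, P z ^ 2 ∂τ = ∑ i, ∑ j, (a i * a j) * ∫ z, φ i z * φ j z ∂τ := by
          simp_rw [e1]
          rw [integral_finset_sum _ (fun i _ =>
            integrable_finset_sum _ (fun j _ => ((hφint i j).const_mul _)))]
          exact Finset.sum_congr rfl fun i _ => by
            rw [integral_finset_sum _ (fun j _ => (hφint i j).const_mul _)]
            exact Finset.sum_congr rfl fun j _ => integral_const_mul _ _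
      _ = ∑ i, a i ^ 2 := by
          simp_rw [hON]
          simp [Finset.sum_ite_eq, sq]
  have ha2 : ∑ i, a i ^ 2 ≤ 1 := by
    rw [← hsq]
    have hint : Integrable (fun z => P z ^ 2) τ :=
      integrable_of_cOn hK (hPc.pow 2) τ hτ
    calc ∫ z, P z ^ 2 ∂τ ≤ ∫ _z, (1 : ℝ) ∂τ := by
          refine integral_mono_ae hint (integrable_const 1) ?_
          filter_upwards [haeK τ hτ] with z hz
          exact (sq_le_one_iff_abs_le_one (P z)).mpr (hPle z hz)
      _ = 1 := by simp
  -- Cauchy-Schwarz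
  have CS : ∀ c : Fin T → ℝ, ∑ i, a i * c i ≤ Real.sqrt (∑ i, c i ^ 2) := by
    intro c
    have h1 : (∑ i, a i * c i) ^ 2 ≤ (∑ i, a i ^ 2) * ∑ i, c i ^ 2 :=
      Finset.sum_mul_sq_le_sq_mul_sq _ _ _
    have hc0 : (0:ℝ) ≤ ∑ i, c i ^ 2 := Finset.sum_nonneg fun i _ => sq_nonneg _
    have h2 : (∑ i, a i * c i) ^ 2 ≤ ∑ i, c i ^ 2 := h1.trans (by nlinarith)
    calc ∑ i, a i * c i ≤ |∑ i, a i * c i| := le_abs_self _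
      _ = Real.sqrt ((∑ i, a i * c i) ^ 2) := (Real.sqrt_sq_eq_abs _).symm
      _ ≤ Real.sqrt (∑ i, c i ^ 2) := Real.sqrt_le_sqrt h2
  -- μ as feasible signed measure
  have hμjd := jd_of_toSignedMeasure μ
  have hsintμ : ∀ f : (Fin n → ℝ) → ℝ, sint μ.toSignedMeasure f = ∫ z, f z ∂μ := by
    intro f; rw [sint, hμjd]; simp
  have hμtvK : μ.toSignedMeasure.totalVariation Kᶜ = 0 := by
    show (μ.toSignedMeasure.toJordanDecomposition.posPart
        + μ.toSignedMeasure.toJordanDecomposition.negPart) Kᶜ = 0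
    rw [hμjd]; simpa using hμK
  have hμtv : tvNorm μ.toSignedMeasure = (μ Set.univ).toReal := by
    show ((μ.toSignedMeasure.toJordanDecomposition.posPart
        + μ.toSignedMeasure.toJordanDecomposition.negPart) Set.univ).toReal = _
    rw [hμjd]; simp
  have hμfeas : Real.sqrt (∑ i, (sint μ.toSignedMeasure (φ i) - y i) ^ 2) ≤ δ := by
    have e : ∀ i, (sint μ.toSignedMeasure (φ i) - y i) ^ 2 = ε i ^ 2 := by
      intro i; rw [hsintμ, hy]; ring
    simpa only [e] using hε
  have hminμ : tvNorm Δ ≤ (μ Set.univ).toReal := hμtv ▸ hΔmin _ hμtvK hμfeas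
  -- expansion of ∫ P
  have hexp : ∀ (ρ : Measure (Fin n → ℝ)) [IsFiniteMeasure ρ], ρ Kᶜ = 0 →
      ∫ z, P z ∂ρ = ∑ i, a i * ∫ z, φ i z ∂ρ := by
    intro ρ _i hρ
    rw [hP, integral_finset_sum _ (fun i _ => (integrable_of_cOn hK (hφc i) ρ hρ).const_mul _)]
    exact Finset.sum_congr rfl fun i _ => integral_const_mul _ _
  have hsintΔP : sint Δ P = ∑ i, a i * sint Δ (φ i) := by
    rw [sint, hexp ν₁ hparts.1, hexp ν₂ hparts.2, ← Finset.sum_sub_distrib]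
    exact Finset.sum_congr rfl fun i _ => by rw [sint]; ring
  -- upper bound
  have key : (μ Set.univ).toReal - sint Δ P ≤ 2 * δ := by
    rw [← hPtv, hexp μ hμK, hsintΔP, ← Finset.sum_sub_distrib]
    have e : ∀ i, a i * ∫ z, φ i z ∂μ - a i * sint Δ (φ i)
        = a i * (y i - sint Δ (φ i)) + a i * (-ε i) := by
      intro i; rw [hy]; ring
    simp_rw [e]
    rw [Finset.sum_add_distrib]
    have h1 : ∑ i, a i * (y i - sint Δ (φ i)) ≤ δ := by
      refine (CS _).trans (le_trans (le_of_eq ?_) hΔfeas)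
      congr 1; exact Finset.sum_congr rfl fun i _ => by ring
    have h2 : ∑ i, a i * (-ε i) ≤ δ := by
      refine (CS _).trans (le_trans (le_of_eq ?_) hε)
      congr 1; exact Finset.sum_congr rfl fun i _ => by ring
    linarith
  -- lower bound
  have hPν₁ : Integrable P ν₁ := integrable_of_cOn hK hPc ν₁ hparts.1
  have hPν₂ : Integrable P ν₂ := integrable_of_cOn hK hPc ν₂ hparts.2
  have hb1 : ∫ z, P z ∂ν₁ ≤ (ν₁ Set.univ).toReal := by
    calc ∫ z, P z ∂ν₁ ≤ ∫ _z, (1 : ℝ) ∂ν₁ := by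
          refine integral_mono_ae hPν₁ (integrable_const 1) ?_
          filter_upwards [haeK ν₁ hparts.1] with z hz using (abs_le.mp (hPle z hz)).2
      _ = (ν₁ Set.univ).toReal := by simp; rfl
  have hb2 : -∫ z, P z ∂ν₂ ≤ (ν₂ Set.univ).toReal := by
    rw [← integral_neg]
    calc ∫ z, -P z ∂ν₂ ≤ ∫ _z, (1 : ℝ) ∂ν₂ := by
          refine integral_mono_ae hPν₂.neg (integrable_const 1) ?_
          filter_upwards [haeK ν₂ hparts.2] with z hz
          have := (abs_le.mp (hPle z hz)).1; linarith
      _ = (ν₂ Set.univ).toReal := by simp; rfl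
  have low : sint Δ P ≤ tvNorm Δ := by
    rw [sint, tvNorm, htv]
    have e : ((ν₁ + ν₂) Set.univ).toReal
        = (ν₁ Set.univ).toReal + (ν₂ Set.univ).toReal := by
      simp [Measure.add_apply, ENNReal.toReal_add (measure_ne_top _ _) (measure_ne_top _ _)]
    rw [e]; linarith
  exact ⟨by linarith, by linarith⟩
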